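/- Let d ≥ 1, β ∈ (0,d], and let Q ⊂ ℝ^d be a cube. There exists a constant C' > 0 depending only on β and d such that: whenever {Q_k} is a countable family of pairwise non-overlapping cubes in 𝓓(Q) satisfying the packing condition Σ_{k : Q_k ⊂ Q'} l(Q_k)^β ≤ 2 l(Q')^β for every cube Q' ∈ 𝓓(Q), then for every nonnegative f ∈ L¹(∪_k Q_k; 𝓗^{β,Q}_∞) one has Σ_k ∫_{Q_k} f d𝓗^{β,Q}_∞ ≤ C' ∫_{∪_k Q_k} f d𝓗^{β,Q}_∞. -/

import Mathlib

open Set MeasureTheory ENNReal NNReal Filter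

noncomputable section

/-- `ℝ^d` with the Euclidean metric. -/
abbrev Euc (d : ℕ) : Type := EuclideanSpace ℝ (Fin d)

/-- An axis-parallel cube in `ℝ^d`, given by its lower corner and (positive) side length. -/
structure Cube (d : ℕ) where
  corner : Fin d → ℝ
  side : ℝ
  side_pos : 0 < side

namespace Cube

/-- The (half-open) set of points of the cube. -/
def set {d : ℕ} (Q : Cube d) : Set (Euc d) :=
  {x : Euc d | ∀ i, Q.corner i ≤ x i ∧ x i < Q.corner i + Q.side}

/-- The dyadic lattice `𝓓(Q)` generated by `Q`: all cubes of side `l(Q)·2ⁿ` (`n : ℤ`) with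
corners on the correspondingly rescaled grid anchored at the corner of `Q`; equivalently `Q`,
its dyadic ancestors, and all of their repeated dyadic subdivisions. -/
def dyadic {d : ℕ} (Q : Cube d) : Set (Cube d) :=
  {Q' | ∃ (n : ℤ) (k : Fin d → ℤ), Q'.side = Q.side * 2 ^ n ∧
    ∀ i, Q'.corner i = Q.corner i + (k i : ℝ) * (Q.side * 2 ^ n)}

end Cube

/-- The spherical Hausdorff content `𝓗^β_∞`, with `ω_β = π^{β/2}/Γ(β/2+1)`. -/
def hausdorffContent (d : ℕ) (β : ℝ) (E : Set (Euc d)) : ℝ≥0∞ :=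
  ⨅ (c : ℕ → Euc d × ℝ) (_ : E ⊆ ⋃ i, Metric.ball (c i).1 (c i).2),
    ∑' i, ENNReal.ofReal (Real.pi ^ (β / 2) / Real.Gamma (β / 2 + 1) * (c i).2 ^ β)

/-- The dyadic Hausdorff content `𝓗^{β,Q}_∞` adapted to the cube `Q`. -/
def dyadicContent (d : ℕ) (β : ℝ) (Q : Cube d) (E : Set (Euc d)) : ℝ≥0∞ :=
  ⨅ (c : ℕ → Cube d) (_ : ∀ i, c i ∈ Q.dyadic) (_ : E ⊆ ⋃ i, (c i).set),
    ∑' i, ENNReal.ofReal ((c i).side ^ β)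

/-- The Choquet integral `∫_A f dH := ∫_0^∞ H({x ∈ A : f x > t}) dt`. -/
def choquetIntegral {X : Type*} (H : Set X → ℝ≥0∞) (A : Set X) (f : X → ℝ) : ℝ≥0∞ :=
  ∫⁻ t in Set.Ioi (0 : ℝ), H {x | x ∈ A ∧ t < f x}

/-- `f` is `H`-quasicontinuous: for every `ε > 0` there is an open set `O` with `H O < ε`
such that `f` restricted to `Oᶜ` is continuous. -/
def QuasiContinuous {X : Type*} [TopologicalSpace X] (H : Set X → ℝ≥0∞) (f : X → ℝ) : Prop :=
  ∀ ε : ℝ, 0 < ε → ∃ O : Set X, IsOpen O ∧ H O < ENNReal.ofReal ε ∧ ContinuousOn f Oᶜ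

/-- `f ∈ L¹(A; H)`: `f` is `H`-quasicontinuous and `∫_A |f| dH < ∞`. -/
def MemChoquetL1 {X : Type*} [TopologicalSpace X] (H : Set X → ℝ≥0∞) (A : Set X)
    (f : X → ℝ) : Prop :=
  QuasiContinuous H f ∧ choquetIntegral H A (fun x => |f x|) < ⊤

/-- The `BMO^β(Q₀)` seminorm: `sup_{Q ⊆ Q₀} inf_{c ∈ ℝ} l(Q)^{-β} ∫_Q |u - c| d𝓗^β_∞`. -/
def bmoSeminorm (d : ℕ) (β : ℝ) (Q₀ : Set (Euc d)) (u : Euc d → ℝ) : ℝ≥0∞ :=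
  ⨆ (Q : Cube d) (_ : Q.set ⊆ Q₀),
    ⨅ c : ℝ, choquetIntegral (hausdorffContent d β) Q.set (fun x => |u x - c|) /
      ENNReal.ofReal (Q.side ^ β)

/-- Membership in `BMO^β(Q₀)`. -/
def MemBMO (d : ℕ) (β : ℝ) (Q₀ : Set (Euc d)) (u : Euc d → ℝ) : Prop :=
  MemChoquetL1 (hausdorffContent d β) Q₀ u ∧ bmoSeminorm d β Q₀ u < ⊤


/-- The classical John–Nirenberg BMO seminorm on `Q₀` with respect to Lebesgue measure. -/
def bmoClassical (d : ℕ) (Q₀ : Set (Euc d)) (u : Euc d → ℝ) : ℝ≥0∞ :=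
  ⨆ (Q : Cube d) (_ : Q.set ⊆ Q₀),
    (volume Q.set)⁻¹ * ∫⁻ x in Q.set, ENNReal.ofReal |u x - ⨍ y in Q.set, u y|

/-- The axis-parallel affine subspace of `ℝ^d` obtained by freeing the coordinates in `S`
and fixing the remaining coordinates to the values of `b`. -/
def hyperplane (d : ℕ) (S : Finset (Fin d)) (b : Fin d → ℝ) : Set (Euc d) :=
  {x : Euc d | ∀ i ∉ S, x i = b i}

/-- The classical BMO seminorm of `u` on `Q₀ ∩ H` with respect to the `k`-dimensional
Hausdorff measure `𝓗^k`, the supremum being over the subcubes `Q.set ∩ H ⊆ Q₀ ∩ H`. -/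
def bmoClassicalOnPlane (d k : ℕ) (Q₀ : Cube d) (H : Set (Euc d)) (u : Euc d → ℝ) : ℝ≥0∞ :=
  ⨆ (Q : Cube d) (_ : Q.set ∩ H ⊆ Q₀.set),
    (Measure.hausdorffMeasure (k : ℝ) (Q.set ∩ H))⁻¹ *
      ∫⁻ x in Q.set ∩ H,
        ENNReal.ofReal |u x - ⨍ y in Q.set ∩ H, u y ∂(Measure.hausdorffMeasure (k : ℝ))|
          ∂(Measure.hausdorffMeasure (k : ℝ))

/-- The unique dyadic cube of `𝓓(Q)` of generation `n` (side `l(Q)·2^{-n}`) containing `x`. -/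
def dyadicCubeAt {d : ℕ} (Q : Cube d) (n : ℕ) (x : Euc d) : Cube d where
  corner := fun i => Q.corner i + Q.side * (2 : ℝ)⁻¹ ^ n *
    (⌊(x i - Q.corner i) / (Q.side * (2 : ℝ)⁻¹ ^ n)⌋ : ℝ)
  side := Q.side * (2 : ℝ)⁻¹ ^ n
  side_pos := by have := Q.side_pos; positivity

/-- The dyadic `β`-Hausdorff maximal function associated to `𝓗^{β,Q}_∞`. -/
def dyadicMaximal (d : ℕ) (β : ℝ) (Q : Cube d) (f : Euc d → ℝ) (x : Euc d) : ℝ≥0∞ :=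
  ⨆ (Q' : Cube d) (_ : Q' ∈ Q.dyadic) (_ : x ∈ Q'.set),
    choquetIntegral (dyadicContent d β Q) Q'.set (fun y => |f y|) / ENNReal.ofReal (Q'.side ^ β)

/-- The `BMO^{β,p}(Q₀)` seminorm. -/
def bmoSeminormP (d : ℕ) (β p : ℝ) (Q₀ : Set (Euc d)) (u : Euc d → ℝ) : ℝ≥0∞ :=
  ⨆ (Q : Cube d) (_ : Q.set ⊆ Q₀),
    ⨅ c : ℝ, (choquetIntegral (hausdorffContent d β) Q.set (fun x => |u x - c| ^ p) /
      ENNReal.ofReal (Q.side ^ β)) ^ (1 / p)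

/-- The standard normalization constant `γ(α) = π^{d/2} 2^α Γ(α/2) / Γ((d-α)/2)`. -/
def rieszConst (d : ℕ) (α : ℝ) : ℝ :=
  Real.pi ^ ((d : ℝ) / 2) * 2 ^ α * Real.Gamma (α / 2) / Real.Gamma (((d : ℝ) - α) / 2)

/-- The Riesz potential `I_α μ (x) = γ(α)⁻¹ ∫ |x - y|^{α - d} dμ(y)`. -/
def rieszPotential (d : ℕ) (α : ℝ) (μ : Measure (Euc d)) (x : Euc d) : ℝ :=
  (rieszConst d α)⁻¹ * (∫⁻ y, ENNReal.ofReal (‖x - y‖ ^ (α - (d : ℝ))) ∂μ).toReal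

/-- The Morrey norm `‖μ‖_{ℳ^γ} = sup_{x, r>0} μ(B(x,r))/r^γ`. -/
def morreyNorm (d : ℕ) (γ : ℝ) (μ : Measure (Euc d)) : ℝ≥0∞ :=
  ⨆ (x : Euc d) (r : ℝ) (_ : 0 < r), μ (Metric.ball x r) / ENNReal.ofReal (r ^ γ)

/-- The dyadic `BMO^β_*(Q₀)` seminorm, where for each subcube `Q` the dyadic Hausdorff
content adapted to that `Q` is used. -/
def bmoDyadicSeminorm (d : ℕ) (β : ℝ) (Q₀ : Set (Euc d)) (u : Euc d → ℝ) : ℝ≥0∞ :=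
  ⨆ (Q : Cube d) (_ : Q.set ⊆ Q₀),
    ⨅ c : ℝ, choquetIntegral (dyadicContent d β Q) Q.set (fun x => |u x - c|) /
      ENNReal.ofReal (Q.side ^ β)

/-- A (possibly infinite) cube in `ℝ^d`: either a finite cube, or a product of intervals
which are infinite in every coordinate direction. -/
def IsGenCube (d : ℕ) (S : Set (Euc d)) : Prop :=
  (∃ Q : Cube d, S = Q.set) ∨
  (∃ I : Fin d → Set ℝ,
      (∀ i, (∃ a, I i = Set.Ici a) ∨ (∃ b, I i = Set.Iio b) ∨ I i = Set.univ) ∧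
      S = {x : Euc d | ∀ i, x i ∈ I i})

/-- The Choquet integral of an `ℝ≥0∞`-valued function. -/
def choquetIntegralE {X : Type*} (H : Set X → ℝ≥0∞) (f : X → ℝ≥0∞) : ℝ≥0∞ :=
  ∫⁻ t in Set.Ioi (0 : ℝ), H {x | ENNReal.ofReal t < f x}

section AuxPacking

variable {d : ℕ}

/-- 1D grid lemma: if two dyadic grid intervals share a point and the first has smaller
scale, the first is contained in the second. -/
lemma grid_subset {s : ℝ} (hs : 0 < s) {n m : ℤ} (hnm : n ≤ m) (k l : ℤ) {a t y : ℝ}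
    (ht1 : a + k * (s * 2 ^ n) ≤ t) (ht2 : t < a + k * (s * 2 ^ n) + s * 2 ^ n)
    (ht3 : a + l * (s * 2 ^ m) ≤ t) (ht4 : t < a + l * (s * 2 ^ m) + s * 2 ^ m)
    (hy1 : a + k * (s * 2 ^ n) ≤ y) (hy2 : y < a + k * (s * 2 ^ n) + s * 2 ^ n) :
    a + l * (s * 2 ^ m) ≤ y ∧ y < a + l * (s * 2 ^ m) + s * 2 ^ m := by
  set h : ℝ := s * 2 ^ n with hh
  have hhpos : 0 < h := by positivity
  set M : ℤ := 2 ^ (m - n).toNat with hM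
  have hMR : (M : ℝ) = 2 ^ (m - n) := by
    rw [hM]
    push_cast
    rw [← zpow_natCast (2 : ℝ), Int.toNat_of_nonneg (by omega)]
  have h2 : (2 : ℝ) ^ m = 2 ^ n * 2 ^ (m - n) := by
    rw [← zpow_add₀ (two_ne_zero : (2 : ℝ) ≠ 0)]
    congr 1
    omega
  have hsm : s * 2 ^ m = h * M := by rw [h2, hMR, hh]; ring
  have key1 : l * M ≤ k := by
    have hr : ((l : ℝ) * M) * h < ((k : ℝ) + 1) * h := by
      rw [hsm] at ht3; nlinarith [ht3, ht2]
    have : (l : ℝ) * M < (k : ℝ) + 1 := lt_of_mul_lt_mul_right hr hhpos.le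
    have : l * M < k + 1 := by exact_mod_cast this
    omega
  have key2 : k + 1 ≤ (l + 1) * M := by
    have hr : (k : ℝ) * h < (((l : ℝ) + 1) * M) * h := by
      rw [hsm] at ht4; nlinarith [ht1, ht4]
    have : (k : ℝ) < ((l : ℝ) + 1) * M := lt_of_mul_lt_mul_right hr hhpos.le
    have : k < (l + 1) * M := by exact_mod_cast this
    omega
  have key1R : ((l : ℝ) * M) * h ≤ (k : ℝ) * h := by
    have : ((l : ℝ) * M) ≤ (k : ℝ) := by exact_mod_cast key1
    exact mul_le_mul_of_nonneg_right this hhpos.le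
  have key2R : ((k : ℝ) + 1) * h ≤ (((l : ℝ) + 1) * M) * h := by
    have : ((k : ℝ) + 1) ≤ ((l : ℝ) + 1) * M := by exact_mod_cast key2
    exact mul_le_mul_of_nonneg_right this hhpos.le
  rw [hsm]
  constructor <;> nlinarith [hy1, hy2, key1R, key2R]

/-- Nesting dichotomy for dyadic cubes: if two dyadic cubes share a point and the first
has smaller or equal side, then the first is contained in the second. -/
lemma dyadic_subset {Q Q₁ Q₂ : Cube d} (h₁ : Q₁ ∈ Q.dyadic) (h₂ : Q₂ ∈ Q.dyadic)
    (hle : Q₁.side ≤ Q₂.side) {x : Euc d} (hx₁ : x ∈ Q₁.set) (hx₂ : x ∈ Q₂.set) :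
    Q₁.set ⊆ Q₂.set := by
  obtain ⟨n, k, hn, hk⟩ := h₁
  obtain ⟨m, l, hm, hl⟩ := h₂
  have hs := Q.side_pos
  have hnm : n ≤ m := by
    rw [hn, hm] at hle
    have h2 : (2 : ℝ) ^ n ≤ 2 ^ m := le_of_mul_le_mul_left hle hs
    exact (zpow_le_zpow_iff_right₀ (by norm_num : (1 : ℝ) < 2)).mp h2
  intro y hy i
  have hxi₁ := hx₁ i
  have hxi₂ := hx₂ i
  have hyi := hy i
  rw [hk i, hn] at hxi₁ hyi
  rw [hl i, hm] at hxi₂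
  have := grid_subset hs hnm (k i) (l i) hxi₁.1 hxi₁.2 hxi₂.1 hxi₂.2 hyi.1 hyi.2
  rw [hl i, hm]
  exact this

/-- The center of a cube. -/
def cubeCenter (R : Cube d) : Euc d :=
  (WithLp.equiv 2 (Fin d → ℝ)).symm fun i => R.corner i + R.side / 2

lemma cubeCenter_mem_interior (R : Cube d) {S : Set (Euc d)} (h : R.set ⊆ S) :
    cubeCenter R ∈ interior S := by
  have hside := R.side_pos
  set U : Set (Euc d) :=
    ⋂ i, (EuclideanSpace.proj (𝕜 := ℝ) i) ⁻¹' (Set.Ioo (R.corner i) (R.corner i + R.side))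
    with hU
  have hUopen : IsOpen U :=
    isOpen_iInter_of_finite fun i => isOpen_Ioo.preimage (EuclideanSpace.proj i).continuous
  have hUsub : U ⊆ R.set := by
    intro x hx i
    have hxi := Set.mem_iInter.mp hx i
    simp only [Set.mem_preimage, PiLp.proj_apply, Set.mem_Ioo] at hxi
    exact ⟨hxi.1.le, hxi.2⟩
  have hmem : cubeCenter R ∈ U := by
    refine Set.mem_iInter.mpr fun i => ?_
    simp only [Set.mem_preimage, PiLp.proj_apply, Set.mem_Ioo, cubeCenter,
      WithLp.equiv_symm_apply, PiLp.toLp_apply]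
    constructor <;> linarith
  exact interior_maximal (hUsub.trans h) hUopen hmem

variable (d)

lemma dyadicContent_mono (β : ℝ) (Q : Cube d) {E E' : Set (Euc d)} (h : E ⊆ E') :
    dyadicContent d β Q E ≤ dyadicContent d β Q E' := by
  refine le_iInf fun c => le_iInf fun hc => le_iInf fun hcov => ?_
  exact iInf_le_of_le c (iInf_le_of_le hc (iInf_le_of_le (h.trans hcov) le_rfl))

lemma dyadicContent_le_tsum (β : ℝ) (Q : Cube d) {E : Set (Euc d)} (c : ℕ → Cube d)
    (hc : ∀ i, c i ∈ Q.dyadic) (hcov : E ⊆ ⋃ i, (c i).set) :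
    dyadicContent d β Q E ≤ ∑' i, ENNReal.ofReal ((c i).side ^ β) :=
  iInf_le_of_le c (iInf_le_of_le hc (iInf_le_of_le hcov le_rfl))

/-- There are dyadic families with arbitrarily small total `β`-mass. -/
lemma exists_small_tail {β : ℝ} (hβ : 0 < β) (Q : Cube d) {ε : ℝ≥0∞} (hε : ε ≠ 0) :
    ∃ g : ℕ → Cube d, (∀ i, g i ∈ Q.dyadic) ∧
      ∑' i, ENNReal.ofReal ((g i).side ^ β) ≤ ε := by
  obtain ⟨δ, hδ, hδε⟩ : ∃ δ : ℝ, 0 < δ ∧ ENNReal.ofReal δ ≤ ε := by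
    rcases eq_or_ne ε ⊤ with rfl | hεt
    · exact ⟨1, one_pos, le_top⟩
    · exact ⟨ε.toReal, ENNReal.toReal_pos hε hεt, by rw [ENNReal.ofReal_toReal hεt]⟩
  have hs := Q.side_pos
  have hQβ : (0 : ℝ) < Q.side ^ β := Real.rpow_pos_of_pos hs β
  have hrlt : ((2 : ℝ)⁻¹) ^ β < 1 := Real.rpow_lt_one (by norm_num) (by norm_num) hβ
  have hchoice : ∀ i : ℕ, ∃ mi : ℕ, Q.side ^ β * (((2 : ℝ)⁻¹) ^ β) ^ mi < δ / 2 / 2 ^ i := by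
    intro i
    have hpos : (0 : ℝ) < (δ / 2 / 2 ^ i) / Q.side ^ β := by positivity
    obtain ⟨mi, hmi⟩ := exists_pow_lt_of_lt_one hpos hrlt
    refine ⟨mi, ?_⟩
    have heq : Q.side ^ β * (δ / 2 / 2 ^ i / Q.side ^ β) = δ / 2 / 2 ^ i := by
      field_simp
    calc Q.side ^ β * ((2:ℝ)⁻¹ ^ β) ^ mi
        < Q.side ^ β * (δ / 2 / 2 ^ i / Q.side ^ β) := by
          exact mul_lt_mul_of_pos_left hmi hQβ
      _ = δ / 2 / 2 ^ i := heq
  choose mi hmi using hchoice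
  refine ⟨fun i => ⟨Q.corner, Q.side * (2 : ℝ)⁻¹ ^ (mi i), by positivity⟩, fun i => ?_, ?_⟩
  · refine ⟨-(mi i : ℤ), 0, ?_, fun j => by simp⟩
    simp [zpow_neg, zpow_natCast, inv_pow]
  · have hterm : ∀ i, (Q.side * (2 : ℝ)⁻¹ ^ (mi i)) ^ β
        = Q.side ^ β * (((2 : ℝ)⁻¹) ^ β) ^ (mi i) := by
      intro i
      rw [Real.mul_rpow hs.le (by positivity),
        ← Real.rpow_natCast ((2 : ℝ)⁻¹) (mi i), ← Real.rpow_natCast ((2 : ℝ)⁻¹ ^ β) (mi i),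
        ← Real.rpow_mul (by norm_num), ← Real.rpow_mul (by norm_num), mul_comm β]
    calc ∑' i, ENNReal.ofReal ((Q.side * (2 : ℝ)⁻¹ ^ (mi i)) ^ β)
        ≤ ∑' i : ℕ, ENNReal.ofReal (δ / 2 / 2 ^ i) := by
          refine ENNReal.tsum_le_tsum fun i => ENNReal.ofReal_le_ofReal ?_
          rw [hterm i]
          exact (hmi i).le
      _ = ENNReal.ofReal δ := by
          rw [← ENNReal.ofReal_tsum_of_nonneg (fun i => by positivity)
            (summable_geometric_two' δ), tsum_geometric_two' δ]
      _ ≤ ε := hδε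

/-- Content of a set covered by a subfamily of a dyadic family is at most the
corresponding partial mass. -/
lemma content_le_biUnion {β : ℝ} (hβ : 0 < β) (Q : Cube d) {E : Set (Euc d)}
    (c : ℕ → Cube d) (hc : ∀ i, c i ∈ Q.dyadic) (J : Set ℕ)
    (hcov : E ⊆ ⋃ j ∈ J, (c j).set) :
    dyadicContent d β Q E ≤ ∑' j : J, ENNReal.ofReal ((c (j : ℕ)).side ^ β) := by
  classical
  refine ENNReal.le_of_forall_pos_le_add fun ε hε _ => ?_
  obtain ⟨g, hg, hgsum⟩ := exists_small_tail d hβ Q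
    (by exact_mod_cast hε.ne' : ((ε : ℝ≥0∞)) ≠ 0)
  set c' : ℕ → Cube d := fun n => if n % 2 = 0 ∧ n / 2 ∈ J then c (n / 2) else g n with hc'
  have h1 : ∀ n, c' n ∈ Q.dyadic := by
    intro n
    by_cases h : n % 2 = 0 ∧ n / 2 ∈ J <;> simp only [hc', h, if_true, if_false] <;>
      simp [h, hc, hg]
  have h2 : E ⊆ ⋃ n, (c' n).set := by
    intro x hx
    obtain ⟨j, hjJ, hj⟩ := Set.mem_iUnion₂.mp (hcov hx)
    refine Set.mem_iUnion.mpr ⟨2 * j, ?_⟩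
    have hmod : (2 * j) % 2 = 0 ∧ (2 * j) / 2 ∈ J := by
      constructor
      · omega
      · have : (2 * j) / 2 = j := by omega
        rw [this]; exact hjJ
    have hj2 : (2 * j) / 2 = j := by omega
    simp only [hc', if_pos hmod, hj2]
    exact hj
  refine (dyadicContent_le_tsum d β Q c' h1 h2).trans ?_
  set G : ℕ → ℝ≥0∞ := fun n =>
    if n % 2 = 0 ∧ n / 2 ∈ J then ENNReal.ofReal ((c (n / 2)).side ^ β) else 0 with hG
  have h3 : ∀ n, ENNReal.ofReal ((c' n).side ^ β) ≤ G n + ENNReal.ofReal ((g n).side ^ β) := by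
    intro n
    by_cases h : n % 2 = 0 ∧ n / 2 ∈ J
    · simp only [hc', hG, if_pos h]
      exact le_self_add
    · simp only [hc', hG, if_neg h, zero_add]
      exact le_rfl
  have hGsum : ∑' n, G n = ∑' j : J, ENNReal.ofReal ((c (j : ℕ)).side ^ β) := by
    refine tsum_eq_tsum_of_ne_zero_bij
      (fun j => 2 * ((j : J) : ℕ)) ?_ ?_ ?_
    · intro a b hab
      have hab' : 2 * ((a : J) : ℕ) = 2 * ((b : J) : ℕ) := hab
      have : ((a : J) : ℕ) = ((b : J) : ℕ) := by omega
      exact Subtype.ext (Subtype.ext this)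
    · intro n hn
      have hcond : n % 2 = 0 ∧ n / 2 ∈ J := by
        by_contra hcon
        simp only [Function.mem_support, hG, if_neg hcon, ne_eq, not_true_eq_false] at hn
      have hval : ENNReal.ofReal ((c (n / 2)).side ^ β) ≠ 0 := by
        simp only [ne_eq, ENNReal.ofReal_eq_zero, not_le]
        exact Real.rpow_pos_of_pos (c (n / 2)).side_pos β
      refine ⟨⟨⟨n / 2, hcond.2⟩, hval⟩, ?_⟩
      simp only
      omega
    · intro j
      have h1' : (2 * ((j : J) : ℕ)) % 2 = 0 := by omega
      have h2' : (2 * ((j : J) : ℕ)) / 2 = ((j : J) : ℕ) := by omega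
      simp only [hG, h2']
      rw [if_pos ⟨h1', (j : J).2⟩]
  calc ∑' n, ENNReal.ofReal ((c' n).side ^ β)
      ≤ ∑' n, (G n + ENNReal.ofReal ((g n).side ^ β)) := ENNReal.tsum_le_tsum h3
    _ = (∑' n, G n) + ∑' n, ENNReal.ofReal ((g n).side ^ β) := ENNReal.tsum_add
    _ ≤ (∑' j : J, ENNReal.ofReal ((c (j : ℕ)).side ^ β)) + ε := by
        rw [hGsum]
        exact add_le_add_right hgsum _

lemma dyadicContent_le_side {β : ℝ} (hβ : 0 < β) (Q : Cube d) {E : Set (Euc d)}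
    {q : Cube d} (hq : q ∈ Q.dyadic) (hE : E ⊆ q.set) :
    dyadicContent d β Q E ≤ ENNReal.ofReal (q.side ^ β) := by
  have h := content_le_biUnion d hβ Q (fun _ => q) (fun _ => hq) {0}
    (by
      intro x hx
      exact Set.mem_biUnion rfl (hE hx))
  simpa [tsum_singleton] using h

/-- The key combinatorial estimate. -/
lemma key_sum_le {β : ℝ} (hβ : 0 < β) (Q : Cube d) (F : Set (Cube d))
    (hFd : ∀ q ∈ F, q ∈ Q.dyadic)
    (hdisj : F.Pairwise fun q₁ q₂ => Disjoint (interior q₁.set) (interior q₂.set))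
    (hpack : ∀ Q' : Cube d, Q' ∈ Q.dyadic →
      (∑' q : {q : Cube d // q ∈ F ∧ q.set ⊆ Q'.set}, ENNReal.ofReal (q.1.side ^ β)) ≤
        ENNReal.ofReal (2 * Q'.side ^ β))
    (A : Set (Euc d)) :
    ∑' q : F, dyadicContent d β Q (A ∩ (q : Cube d).set) ≤ 3 * dyadicContent d β Q A := by
  classical
  rcases eq_or_ne (dyadicContent d β Q A) ⊤ with hA | hA
  · rw [hA, ENNReal.mul_top (by norm_num)]
    exact le_top
  refine ENNReal.le_of_forall_pos_le_add fun ε hε _ => ?_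
  have hε3 : (0 : ℝ≥0) < ε / 3 := by positivity
  have hlt : dyadicContent d β Q A < dyadicContent d β Q A + (ε / 3 : ℝ≥0) :=
    ENNReal.lt_add_right hA (by exact_mod_cast hε3.ne')
  obtain ⟨c, hc, hcov, hSig⟩ : ∃ (c : ℕ → Cube d), (∀ i, c i ∈ Q.dyadic) ∧
      A ⊆ ⋃ i, (c i).set ∧
      ∑' i, ENNReal.ofReal ((c i).side ^ β) <
        dyadicContent d β Q A + (ε / 3 : ℝ≥0) := by
    have h := hlt
    conv at h => lhs; rw [dyadicContent]
    obtain ⟨c, h⟩ := iInf_lt_iff.mp h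
    obtain ⟨h1, h⟩ := iInf_lt_iff.mp h
    obtain ⟨h2, h⟩ := iInf_lt_iff.mp h
    exact ⟨c, h1, h2, h⟩
  set S : ℕ → ℝ≥0∞ := fun j => ENNReal.ofReal ((c j).side ^ β) with hS
  set P : F → Prop := fun q => ∃ j, (q : Cube d).set ⊆ (c j).set with hPdef
  have hbound : ∀ q : F, dyadicContent d β Q (A ∩ (q : Cube d).set) ≤
      (if P q then ENNReal.ofReal ((q : Cube d).side ^ β) else 0) +
      ∑' j : {j : ℕ | (c j).set ⊆ (q : Cube d).set}, S (j : ℕ) := by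
    intro q
    by_cases hq : P q
    · rw [if_pos hq]
      exact le_trans (dyadicContent_le_side d hβ Q (hFd q q.2) Set.inter_subset_right)
        le_self_add
    · rw [if_neg hq, zero_add]
      refine content_le_biUnion d hβ Q c hc _ ?_
      intro x hx
      obtain ⟨j, hj⟩ := Set.mem_iUnion.mp (hcov hx.1)
      have hcmp : (c j).set ⊆ (q : Cube d).set := by
        rcases le_total (c j).side (q : Cube d).side with hle | hle
        · exact dyadic_subset (hc j) (hFd q q.2) hle hj hx.2
        · exact absurd ⟨j, dyadic_subset (hFd q q.2) (hc j) hle hx.2 hj⟩ hq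
      exact Set.mem_biUnion hcmp hj
  refine le_trans (ENNReal.tsum_le_tsum hbound)
    (le_trans (le_of_eq ENNReal.tsum_add) ?_)
  have hpart2 : (∑' q : F, ∑' j : {j : ℕ | (c j).set ⊆ (q : Cube d).set}, S (j : ℕ))
      ≤ ∑' j, S j := by
    have hrw : ∀ q : F, (∑' j : {j : ℕ | (c j).set ⊆ (q : Cube d).set}, S (j : ℕ))
        = ∑' j : ℕ, if (c j).set ⊆ (q : Cube d).set then S j else 0 := by
      intro q
      rw [tsum_subtype]
      exact tsum_congr fun j => by rw [Set.indicator_apply]; rfl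
    calc (∑' q : F, ∑' j : {j : ℕ | (c j).set ⊆ (q : Cube d).set}, S (j : ℕ))
        = ∑' (q : F) (j : ℕ), if (c j).set ⊆ (q : Cube d).set then S j else 0 :=
          tsum_congr hrw
      _ = ∑' (j : ℕ) (q : F), if (c j).set ⊆ (q : Cube d).set then S j else 0 :=
          ENNReal.tsum_comm
      _ ≤ ∑' j : ℕ, S j := by
          refine ENNReal.tsum_le_tsum fun j => ?_
          by_cases hex : ∃ q : F, (c j).set ⊆ (q : Cube d).set
          · obtain ⟨q₀, hq₀⟩ := hex
            have huniq : ∀ q : F, (c j).set ⊆ (q : Cube d).set → q = q₀ := by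
              intro q hq
              by_contra hne
              have hnev : (q : Cube d) ≠ (q₀ : Cube d) := fun h => hne (Subtype.ext h)
              have hd := hdisj q.2 q₀.2 hnev
              exact Set.disjoint_left.mp hd
                (cubeCenter_mem_interior (c j) hq)
                (cubeCenter_mem_interior (c j) hq₀)
            calc (∑' q : F, if (c j).set ⊆ (q : Cube d).set then S j else 0)
                ≤ ∑' q : F, if q = q₀ then S j else 0 := by
                  refine ENNReal.tsum_le_tsum fun q => ?_
                  by_cases h : (c j).set ⊆ (q : Cube d).set
                  · rw [if_pos h, if_pos (huniq q h)]
                  · rw [if_neg h]; exact zero_le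
              _ = S j := tsum_ite_eq q₀ (fun _ => S j)
          · have hz : ∀ q : F, (if (c j).set ⊆ (q : Cube d).set then S j else 0) = 0 :=
              fun q => if_neg fun h => hex ⟨q, h⟩
            rw [tsum_congr hz, tsum_zero]
            exact zero_le
  have hpart1 : (∑' q : F, if P q then ENNReal.ofReal ((q : Cube d).side ^ β) else 0)
      ≤ 2 * ∑' j, S j := by
    set v : F → ℝ≥0∞ := fun q => ENNReal.ofReal ((q : Cube d).side ^ β) with hv
    have hsub : (∑' q : F, if P q then v q else 0) = ∑' q : {q : F | P q}, v (q : F) := by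
      rw [tsum_subtype {q : F | P q} v]
      exact tsum_congr fun q => by rw [Set.indicator_apply]; rfl
    rw [hsub]
    have hσ : ∀ q : {q : F | P q}, ∃ j, (((q : F) : Cube d)).set ⊆ (c j).set := fun q => q.2
    choose σ hσs using hσ
    rw [← (Equiv.sigmaFiberEquiv σ).tsum_eq (fun q : {q : F | P q} => v (q : F)),
      ENNReal.tsum_sigma']
    have hfiber : ∀ j : ℕ,
        (∑' q : {q : {q : F | P q} // σ q = j}, v ((q : {q : F | P q}) : F)) ≤
          ENNReal.ofReal (2 * (c j).side ^ β) := by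
      intro j
      set i : {q : {q : F | P q} // σ q = j} → {q : Cube d // q ∈ F ∧ q.set ⊆ (c j).set} :=
        fun q => ⟨(((q : {q : F | P q}) : F) : Cube d),
          ⟨((q : {q : F | P q}) : F).2, by
            have := hσs (q : {q : F | P q})
            rwa [q.2] at this⟩⟩ with hi
      have hinj : Function.Injective i := by
        intro a b hab
        have h1 : (i a).1 = (i b).1 := by rw [hab]
        exact Subtype.ext (Subtype.ext (Subtype.ext h1))
      have hle := tsum_comp_le_tsum_of_injective hinj
        (fun r : {q : Cube d // q ∈ F ∧ q.set ⊆ (c j).set} => ENNReal.ofReal (r.1.side ^ β))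
      exact le_trans (le_of_eq (tsum_congr fun q => rfl)) (hle.trans (hpack (c j) (hc j)))
    refine le_trans (ENNReal.tsum_le_tsum hfiber) ?_
    have h2S : ∀ j, ENNReal.ofReal (2 * (c j).side ^ β) = 2 * S j := by
      intro j
      rw [hS, ENNReal.ofReal_mul (by norm_num)]
      norm_num
    rw [tsum_congr h2S, ENNReal.tsum_mul_left]
  calc (∑' q : F, if P q then ENNReal.ofReal ((q : Cube d).side ^ β) else 0)
        + ∑' q : F, ∑' j : {j : ℕ | (c j).set ⊆ (q : Cube d).set}, S (j : ℕ)
      ≤ 2 * (∑' j, S j) + ∑' j, S j := add_le_add hpart1 hpart2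
    _ = 3 * ∑' j, S j := by ring
    _ ≤ 3 * (dyadicContent d β Q A + (ε / 3 : ℝ≥0)) := by
        exact mul_le_mul_right hSig.le 3
    _ = 3 * dyadicContent d β Q A + ε := by
        rw [mul_add]
        congr 1
        rw [ENNReal.coe_div (by norm_num : (3 : ℝ≥0) ≠ 0),
          show ((3 : ℝ≥0) : ℝ≥0∞) = 3 from by norm_num,
          ENNReal.mul_div_cancel' (by norm_num) (by norm_num)]

end AuxPacking

theorem packing_implies_sum_le_integral (d : ℕ) (hd : 1 ≤ d) (β : ℝ) (hβ : 0 < β)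
    (hβd : β ≤ (d : ℝ)) (Q : Cube d) :
    ∃ C' : ℝ, 0 < C' ∧
      ∀ F : Set (Cube d), F.Countable → (∀ q ∈ F, q ∈ Q.dyadic) →
        (F.Pairwise fun q₁ q₂ => Disjoint (interior q₁.set) (interior q₂.set)) →
        (∀ Q' : Cube d, Q' ∈ Q.dyadic →
          (∑' q : {q : Cube d // q ∈ F ∧ q.set ⊆ Q'.set}, ENNReal.ofReal (q.1.side ^ β)) ≤
            ENNReal.ofReal (2 * Q'.side ^ β)) →
        ∀ f : Euc d → ℝ, (∀ x, 0 ≤ f x) →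
          MemChoquetL1 (dyadicContent d β Q) (⋃ q ∈ F, q.set) f →
          (∑' q : F, choquetIntegral (dyadicContent d β Q) (q : Cube d).set f) ≤
            ENNReal.ofReal C' *
              choquetIntegral (dyadicContent d β Q) (⋃ q ∈ F, q.set) f := by
  refine ⟨3, by norm_num, ?_⟩
  intro F hFc hFd hdisj hpack f hf hmem
  haveI := hFc.to_subtype
  have hmeas : ∀ q : F, Measurable fun t : ℝ =>
      dyadicContent d β Q {x | x ∈ (q : Cube d).set ∧ t < f x} := by
    intro q
    refine Antitone.measurable fun s t hst => ?_
    exact dyadicContent_mono d β Q fun x hx => ⟨hx.1, lt_of_le_of_lt hst hx.2⟩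
  calc ∑' q : F, choquetIntegral (dyadicContent d β Q) (q : Cube d).set f
      = ∫⁻ t in Set.Ioi (0 : ℝ),
          ∑' q : F, dyadicContent d β Q {x | x ∈ (q : Cube d).set ∧ t < f x} :=
        (lintegral_tsum fun q => (hmeas q).aemeasurable).symm
    _ ≤ ∫⁻ t in Set.Ioi (0 : ℝ),
          3 * dyadicContent d β Q {x | x ∈ (⋃ q ∈ F, q.set) ∧ t < f x} := by
        refine lintegral_mono fun t => ?_
        refine le_trans (le_trans (ENNReal.tsum_le_tsum fun q =>
          dyadicContent_mono d β Q (E' := {x | x ∈ (⋃ q ∈ F, Cube.set q) ∧ t < f x} ∩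
            (q : Cube d).set) fun x hx => ⟨⟨Set.mem_biUnion q.2 hx.1, hx.2⟩, hx.1⟩)
          (key_sum_le d hβ Q F hFd hdisj hpack _)) le_rfl
    _ = 3 * choquetIntegral (dyadicContent d β Q) (⋃ q ∈ F, q.set) f :=
        lintegral_const_mul' 3 _ (by norm_num)
    _ = ENNReal.ofReal 3 * choquetIntegral (dyadicContent d β Q) (⋃ q ∈ F, q.set) f := by
        norm_num

end
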